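/- If f₀ ∈ L^∞(𝕋²) satisfies f₀ = f₀ ∘ y_{2τ_k}^{(i_k;L_k)} almost everywhere for a sequence of shears with τ_k → 0 and i_k taking each value in {1,2} infinitely often, then f₀ is almost everywhere equal to a constant. -/

import Mathlib

open MeasureTheory Filter

noncomputable section

instance : Fact ((0:ℝ) < 1) := ⟨one_pos⟩

/-- The 1-dimensional torus `ℝ/ℤ`. -/
abbrev Torus : Type := AddCircle (1 : ℝ)

/-- The 2-dimensional torus `𝕋² = ℝ²/ℤ²`. -/
abbrev Torus2 : Type := Torus × Torus

/-- The representative of a point of the torus in `[0,1)`. -/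
noncomputable def rep (x : Torus) : ℝ := (AddCircle.equivIco 1 0 x : ℝ)

/-- The sign (`+1` on even strips of width `1/(2L)`, `-1` on odd ones). -/
noncomputable def shearSign (L : ℕ) (c : Torus) : ℝ :=
  if Even ⌊(2 * L : ℝ) * rep c⌋ then 1 else -1

/-- The Lagrangian shear flow `y_t^{(i;L)} : 𝕋² → 𝕋²`, translating the coordinate `i`
by `± t` according to the parity of the strip of width `1/(2L)` containing the
other coordinate. -/
noncomputable def shearFlow (i : Fin 2) (L : ℕ) (t : ℝ) (x : Torus2) : Torus2 :=
  if i = 0 then (x.1 + ((shearSign L x.2 * t : ℝ) : Torus), x.2)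
  else (x.1, x.2 + ((shearSign L x.1 * t : ℝ) : Torus))

/- ### Auxiliary material -/

open scoped ENNReal

instance : IsProbabilityMeasure (volume : Measure Torus) :=
  ⟨by simp [AddCircle.measure_univ]⟩

instance : Measure.IsAddRightInvariant (volume : Measure Torus2) := by
  rw [Measure.volume_eq_prod Torus Torus]; infer_instance

instance : Measure.IsAddLeftInvariant (volume : Measure Torus2) := by
  rw [Measure.volume_eq_prod Torus Torus]; infer_instance

instance : IsProbabilityMeasure (volume : Measure Torus2) := by
  rw [Measure.volume_eq_prod Torus Torus]; infer_instance

/-- The vector `t eⱼ` in the torus. -/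
def eVec (j : Fin 2) (t : ℝ) : Torus2 :=
  if j = 0 then ((t : Torus), 0) else (0, (t : Torus))

lemma eVec_add (j : Fin 2) (s t : ℝ) : eVec j (s + t) = eVec j s + eVec j t := by
  unfold eVec
  split <;> simp [Prod.ext_iff, AddCircle.coe_add]

lemma eVec_zero (j : Fin 2) : eVec j 0 = 0 := by
  unfold eVec; split <;> simp [Prod.ext_iff]

lemma eVec_zsmul (j : Fin 2) (n : ℤ) (t : ℝ) : eVec j (n * t) = n • eVec j t := by
  unfold eVec
  split <;> simp [Prod.ext_iff, ← zsmul_eq_mul, AddCircle.coe_zsmul]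

lemma continuous_eVec (j : Fin 2) : Continuous fun t : ℝ => eVec j t := by
  unfold eVec
  split
  · exact Continuous.prodMk (AddCircle.continuous_mk' 1) continuous_const
  · exact Continuous.prodMk continuous_const (AddCircle.continuous_mk' 1)

lemma fin2_cases (j : Fin 2) : j = 0 ∨ j = 1 := by fin_cases j <;> simp

lemma shearSign_cases (L : ℕ) (c : Torus) : shearSign L c = 1 ∨ shearSign L c = -1 := by
  unfold shearSign; split <;> simp

/-- If `f₀ ∈ L^∞(𝕋²)` satisfies `f₀ = f₀ ∘ y_{2τ_k}^{(i_k;L_k)}`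
almost everywhere for a sequence of shears with `τ_k → 0`, `τ_k > 0`, and `i_k`
taking each value in `{1,2}` infinitely often, then `f₀` is a.e. constant. -/
theorem invariant_under_shears_ae_const (f₀ : Torus2 → ℝ)
    (hmeas : Measurable f₀) (hbd : ∃ C : ℝ, ∀ x, |f₀ x| ≤ C)
    (i : ℕ → Fin 2) (L : ℕ → ℕ) (τ : ℕ → ℝ)
    (hτpos : ∀ k, 0 < τ k) (hτ : Tendsto τ atTop (nhds 0))
    (hi0 : ∀ N : ℕ, ∃ k ≥ N, i k = 0) (hi1 : ∀ N : ℕ, ∃ k ≥ N, i k = 1)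
    (hinv : ∀ k, f₀ =ᵐ[volume] fun x => f₀ (shearFlow (i k) (L k) (2 * τ k) x)) :
    ∃ c : ℝ, f₀ =ᵐ[volume] fun _ => c := by
  classical
  obtain ⟨C, hC⟩ := hbd
  have mp : ∀ v : Torus2, MeasurePreserving (fun x => x + v)
      (volume : Measure Torus2) volume := fun v => measurePreserving_add_right volume v
  set Φ : Torus2 → ℝ≥0∞ := fun v => ∫⁻ x, ‖f₀ (x + v) - f₀ x‖₊ with hΦdef
  have hmv : ∀ v : Torus2, Measurable fun x => ((‖f₀ (x + v) - f₀ x‖₊ : ℝ≥0∞)) :=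
    fun v => ((hmeas.comp (measurable_add_const v)).sub hmeas).nnnorm.coe_nnreal_ennreal
  have hshift : ∀ v w : Torus2,
      (∫⁻ x, (‖f₀ (x + w + v) - f₀ (x + w)‖₊ : ℝ≥0∞)) = Φ v := fun v w =>
    (mp w).lintegral_comp (hmv v)
  have hzero : Φ 0 = 0 := by simp [hΦdef]
  have haeiff : ∀ v : Torus2, Φ v = 0 ↔ ∀ᵐ x ∂(volume : Measure Torus2),
      f₀ (x + v) = f₀ x := by
    intro v
    rw [hΦdef]
    rw [lintegral_eq_zero_iff (hmv v)]
    refine eventually_congr (Eventually.of_forall fun x => ?_)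
    simp [sub_eq_zero]
  have hsub : ∀ v w : Torus2, Φ (v + w) ≤ Φ v + Φ w := by
    intro v w
    have h1 : Φ (v + w) = ∫⁻ x, (‖f₀ (x + w + v) - f₀ x‖₊ : ℝ≥0∞) := by
      rw [hΦdef]
      refine lintegral_congr fun x => ?_
      rw [add_assoc, add_comm w v]
    have h2 : ∀ x : Torus2, (‖f₀ (x + w + v) - f₀ x‖₊ : ℝ≥0∞)
        ≤ (‖f₀ (x + w + v) - f₀ (x + w)‖₊ : ℝ≥0∞) + ‖f₀ (x + w) - f₀ x‖₊ := by
      intro x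
      rw [← ENNReal.coe_add]
      rw [ENNReal.coe_le_coe]
      simpa [← nndist_eq_nnnorm] using
        nndist_triangle (f₀ (x + w + v)) (f₀ (x + w)) (f₀ x)
    calc Φ (v + w) ≤ ∫⁻ x, ((‖f₀ (x + w + v) - f₀ (x + w)‖₊ : ℝ≥0∞)
          + ‖f₀ (x + w) - f₀ x‖₊) := by rw [h1]; exact lintegral_mono h2
    _ = (∫⁻ x, (‖f₀ (x + w + v) - f₀ (x + w)‖₊ : ℝ≥0∞))
          + ∫⁻ x, (‖f₀ (x + w) - f₀ x‖₊ : ℝ≥0∞) :=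
        lintegral_add_left ((hmv v).comp (measurable_add_const w)) _
    _ = Φ v + Φ w := by rw [hshift v w]
  have hneg : ∀ v : Torus2, Φ (-v) = Φ v := by
    intro v
    rw [← hshift (-v) v, hΦdef]
    refine lintegral_congr fun x => ?_
    rw [add_neg_cancel_right, ← neg_sub (f₀ (x + v)) (f₀ x), nnnorm_neg]
  have hnsmul : ∀ v : Torus2, Φ v = 0 → ∀ n : ℕ, Φ (n • v) = 0 := by
    intro v hv n
    induction n with
    | zero => simpa using hzero
    | succ n ih =>
      have h := hsub (n • v) v
      rw [← succ_nsmul] at h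
      exact le_zero_iff.mp (by simpa [ih, hv] using h)
  have hzsmul : ∀ v : Torus2, Φ v = 0 → ∀ n : ℤ, Φ (n • v) = 0 := by
    intro v hv n
    obtain ⟨m, rfl | rfl⟩ := n.eq_nat_or_neg
    · rw [natCast_zsmul]; exact hnsmul v hv m
    · rw [neg_smul, hneg, natCast_zsmul]; exact hnsmul v hv m
  -- continuity of `Φ` at `0`
  have hcont : ∀ ε : ℝ≥0∞, 0 < ε → ∀ᶠ v in nhds (0 : Torus2), Φ v ≤ ε := by
    intro ε hε
    rcases eq_top_or_lt_top ε with rfl | hεtop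
    · exact Eventually.of_forall fun v => le_top
    have h3 : (0:ℝ≥0∞) < ε / 3 := ENNReal.div_pos hε.ne' (by norm_num)
    have h3top : ε / 3 ≠ ∞ := (ENNReal.div_lt_top hεtop.ne (by norm_num)).ne
    have hint : Integrable f₀ (volume : Measure Torus2) :=
      memLp_one_iff_integrable.mp (MemLp.of_bound hmeas.aestronglyMeasurable C
        (ae_of_all _ fun x => by simpa [Real.norm_eq_abs] using hC x))
    obtain ⟨g, hg, hgint⟩ := hint.exists_boundedContinuous_lintegral_sub_le h3.ne'
    have hgm : Measurable (g : Torus2 → ℝ) := g.continuous.measurable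
    have hgu : UniformContinuous (g : Torus2 → ℝ) :=
      CompactSpace.uniformContinuous_of_continuous g.continuous
    have h3R : 0 < (ε / 3).toReal := ENNReal.toReal_pos h3.ne' h3top
    obtain ⟨δ, hδ, hδ'⟩ := Metric.uniformContinuous_iff.mp hgu ((ε / 3).toReal) h3R
    filter_upwards [Metric.ball_mem_nhds (0 : Torus2) hδ] with v hv
    have hvd : ∀ x : Torus2, dist (x + v) x < δ := by
      intro x
      have : dist (x + v) x = dist v 0 := by
        have h := dist_add_left x v 0
        rw [add_zero] at h
        exact h
      rw [this]
      simp only [dist_zero_right] at hv ⊢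
      simpa using hv
    have key : ∀ x : Torus2, (‖f₀ (x + v) - f₀ x‖₊ : ℝ≥0∞) ≤
        ((‖f₀ (x + v) - g (x + v)‖₊ : ℝ≥0∞) + ‖g (x + v) - g x‖₊) + ‖g x - f₀ x‖₊ := by
      intro x
      rw [← ENNReal.coe_add, ← ENNReal.coe_add, ENNReal.coe_le_coe]
      have h1 := (nndist_triangle (f₀ (x + v)) (g (x + v)) (f₀ x)).trans
        (add_le_add_right (nndist_triangle (g (x + v)) (g x) (f₀ x)) _)
      simpa [← nndist_eq_nnnorm, add_assoc] using h1
    have m1 : Measurable fun x : Torus2 => ((‖f₀ (x + v) - g (x + v)‖₊ : ℝ≥0∞)) :=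
      ((hmeas.sub hgm).comp (measurable_add_const v)).nnnorm.coe_nnreal_ennreal
    have m2 : Measurable fun x : Torus2 => ((‖g (x + v) - g x‖₊ : ℝ≥0∞)) :=
      ((hgm.comp (measurable_add_const v)).sub hgm).nnnorm.coe_nnreal_ennreal
    have T1 : (∫⁻ x, (‖f₀ (x + v) - g (x + v)‖₊ : ℝ≥0∞)) ≤ ε / 3 := by
      have e1 : (∫⁻ x, (‖f₀ (x + v) - g (x + v)‖₊ : ℝ≥0∞))
          = ∫⁻ y, (‖f₀ y - g y‖₊ : ℝ≥0∞) :=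
        (mp v).lintegral_comp ((hmeas.sub hgm).nnnorm.coe_nnreal_ennreal)
      rw [e1]
      exact hg
    have T2 : (∫⁻ x, (‖g (x + v) - g x‖₊ : ℝ≥0∞)) ≤ ε / 3 := by
      have hb : ∀ x : Torus2, (‖g (x + v) - g x‖₊ : ℝ≥0∞) ≤ ε / 3 := by
        intro x
        have hd := hδ' (hvd x)
        calc (‖g (x + v) - g x‖₊ : ℝ≥0∞) = edist (g (x + v)) (g x) := by
              rw [edist_nndist, nndist_eq_nnnorm]
        _ = ENNReal.ofReal (dist (g (x + v)) (g x)) := by rw [edist_dist]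
        _ ≤ ENNReal.ofReal ((ε / 3).toReal) := ENNReal.ofReal_le_ofReal hd.le
        _ = ε / 3 := ENNReal.ofReal_toReal h3top
      calc (∫⁻ x, (‖g (x + v) - g x‖₊ : ℝ≥0∞)) ≤ ∫⁻ _x : Torus2, ε / 3 :=
            lintegral_mono hb
      _ = ε / 3 := by simp
    have T3 : (∫⁻ x, (‖g x - f₀ x‖₊ : ℝ≥0∞)) ≤ ε / 3 := by
      have : (∫⁻ x, (‖g x - f₀ x‖₊ : ℝ≥0∞)) = ∫⁻ x, (‖f₀ x - g x‖₊ : ℝ≥0∞) :=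
        lintegral_congr fun x => by rw [← nnnorm_neg (g x - f₀ x), neg_sub]
      rw [this]; exact hg
    calc Φ v ≤ ∫⁻ x, (((‖f₀ (x + v) - g (x + v)‖₊ : ℝ≥0∞)
          + ‖g (x + v) - g x‖₊) + ‖g x - f₀ x‖₊) := lintegral_mono key
    _ = ((∫⁻ x, (‖f₀ (x + v) - g (x + v)‖₊ : ℝ≥0∞))
          + ∫⁻ x, (‖g (x + v) - g x‖₊ : ℝ≥0∞)) + ∫⁻ x, (‖g x - f₀ x‖₊ : ℝ≥0∞) := by
        rw [lintegral_add_left (show Measurable fun x : Torus2 => ((‖f₀ (x + v) - g (x + v)‖₊ : ℝ≥0∞)) + ‖g (x + v) - g x‖₊ from m1.add m2), lintegral_add_left m1]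
    _ ≤ (ε / 3 + ε / 3) + ε / 3 := by gcongr
    _ = ε := ENNReal.add_thirds ε
  -- Step A: invariance under the shears gives invariance under small translations
  have hA : ∀ k, Φ (eVec (i k) (2 * τ k)) = 0 := by
    intro k
    rw [haeiff]
    have h2 := (mp (eVec (i k) (2 * τ k))).quasiMeasurePreserving.ae_eq_comp (hinv k)
    filter_upwards [hinv k, h2] with x hx hx2
    simp only [Function.comp] at hx2
    rcases fin2_cases (i k) with hik | hik
    · rw [hik] at hx hx2 ⊢
      rcases shearSign_cases (L k) x.2 with hs | hs
      · have hxv : x + eVec 0 (2 * τ k) = shearFlow 0 (L k) (2 * τ k) x := by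
          simp [eVec, shearFlow, hs, Prod.ext_iff]
        rw [hxv]; exact hx.symm
      · have hsnd : (x + eVec 0 (2 * τ k)).2 = x.2 := by simp [eVec]
        have hss : shearSign (L k) (x + eVec 0 (2 * τ k)).2 = -1 := by rw [hsnd]; exact hs
        have hxv : shearFlow 0 (L k) (2 * τ k) (x + eVec 0 (2 * τ k)) = x := by
          simp [shearFlow, eVec, hs, neg_one_mul, AddCircle.coe_neg, Prod.ext_iff]
        rw [hxv] at hx2
        exact hx2
    · rw [hik] at hx hx2 ⊢
      rcases shearSign_cases (L k) x.1 with hs | hs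
      · have hxv : x + eVec 1 (2 * τ k) = shearFlow 1 (L k) (2 * τ k) x := by
          simp [eVec, shearFlow, hs, Prod.ext_iff]
        rw [hxv]; exact hx.symm
      · have hfst : (x + eVec 1 (2 * τ k)).1 = x.1 := by simp [eVec]
        have hss : shearSign (L k) (x + eVec 1 (2 * τ k)).1 = -1 := by rw [hfst]; exact hs
        have hxv : shearFlow 1 (L k) (2 * τ k) (x + eVec 1 (2 * τ k)) = x := by
          simp [shearFlow, eVec, hs, neg_one_mul, AddCircle.coe_neg, Prod.ext_iff]
        rw [hxv] at hx2
        exact hx2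
  -- Step B: invariance under all coordinate translations
  have Hvec : ∀ j : Fin 2, (∀ N : ℕ, ∃ k ≥ N, i k = j) → ∀ c : ℝ, Φ (eVec j c) = 0 := by
    intro j hj c
    have hsel : ∀ m : ℕ, ∃ k, i k = j ∧ 2 * τ k < 1 / (m + 1) := by
      intro m
      have h2τ : Tendsto (fun k => 2 * τ k) atTop (nhds 0) := by
        simpa using hτ.const_mul 2
      have hev : ∀ᶠ k in atTop, 2 * τ k < 1 / (m + 1) :=
        h2τ.eventually_lt_const (by positivity)
      obtain ⟨K, hK⟩ := hev.exists_forall_of_atTop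
      obtain ⟨k, hkK, hkj⟩ := hj K
      exact ⟨k, hkj, hK k hkK⟩
    choose k hk1 hk2 using hsel
    set t : ℕ → ℝ := fun m => 2 * τ (k m) with ht
    have htpos : ∀ m, 0 < t m := fun m => by
      have := hτpos (k m); rw [ht]; positivity
    have hbase : ∀ m, Φ (eVec j (t m)) = 0 := fun m => by
      rw [ht, ← hk1 m]; exact hA (k m)
    set n : ℕ → ℤ := fun m => ⌊c / t m⌋ with hn
    have hr0 : ∀ m, 0 ≤ c - n m * t m := fun m =>
      Int.sub_floor_div_mul_nonneg c (htpos m)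
    have hr1 : ∀ m, c - n m * t m < t m := fun m =>
      Int.sub_floor_div_mul_lt c (htpos m)
    have hsplit : ∀ m, Φ (eVec j c) ≤ Φ (eVec j (c - n m * t m)) := by
      intro m
      have heq : eVec j c = (n m) • eVec j (t m) + eVec j (c - n m * t m) := by
        rw [← eVec_zsmul, ← eVec_add]
        ring_nf
      have h := hsub ((n m) • eVec j (t m)) (eVec j (c - n m * t m))
      rw [← heq, hzsmul _ (hbase m) (n m), zero_add] at h
      exact h
    have htend : Tendsto (fun m => eVec j (c - n m * t m)) atTop (nhds 0) := by
      have h1 : Tendsto (fun m : ℕ => c - n m * t m) atTop (nhds 0) := by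
        refine squeeze_zero_norm (fun m : ℕ => ?_)
          tendsto_one_div_add_atTop_nhds_zero_nat
        rw [Real.norm_eq_abs, abs_of_nonneg (hr0 m)]
        exact ((hr1 m).trans (hk2 m)).le
      have h2 := ((continuous_eVec j).tendsto 0).comp h1
      rwa [eVec_zero] at h2
    refine le_antisymm ?_ zero_le
    refine ENNReal.le_of_forall_pos_le_add fun ε hε _ => ?_
    rw [zero_add]
    obtain ⟨m, hm⟩ := (htend.eventually (hcont ε (by exact_mod_cast hε))).exists
    exact (hsplit m).trans hm
  have Hall : ∀ v : Torus2, Φ v = 0 := by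
    intro v
    obtain ⟨a, ha⟩ := QuotientAddGroup.mk_surjective v.1
    obtain ⟨b, hb⟩ := QuotientAddGroup.mk_surjective v.2
    have hv : v = eVec 0 a + eVec 1 b := by
      simp [eVec, Prod.ext_iff, ha.symm, hb.symm]
    rw [hv]
    have h := hsub (eVec 0 a) (eVec 1 b)
    rw [Hvec 0 hi0 a, Hvec 1 hi1 b, add_zero] at h
    exact le_zero_iff.mp h
  -- Step C: Fubini argument
  have hall' : ∀ v : Torus2, (∫⁻ x, (‖f₀ (x + v) - f₀ x‖₊ : ℝ≥0∞)) = 0 := by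
    intro v
    have := Hall v
    rwa [hΦdef] at this
  have hFm : Measurable fun p : Torus2 × Torus2 => ((‖f₀ (p.1 + p.2) - f₀ p.1‖₊ : ℝ≥0∞)) :=
    ((hmeas.comp measurable_add).sub (hmeas.comp measurable_fst)).nnnorm.coe_nnreal_ennreal
  have hzero2 : (∫⁻ p, (‖f₀ (p.1 + p.2) - f₀ p.1‖₊ : ℝ≥0∞)
      ∂((volume : Measure Torus2).prod volume)) = 0 := by
    rw [lintegral_prod_symm _ hFm.aemeasurable]
    simp only []
    calc (∫⁻ y, ∫⁻ x, (‖f₀ (x + y) - f₀ x‖₊ : ℝ≥0∞) ∂volume ∂(volume : Measure Torus2))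
        = ∫⁻ _y : Torus2, 0 ∂volume := lintegral_congr fun y => hall' y
    _ = 0 := lintegral_zero
  have hzero3 : ∀ᵐ p ∂((volume : Measure Torus2).prod volume), f₀ (p.1 + p.2) = f₀ p.1 := by
    have h := (lintegral_eq_zero_iff hFm).mp hzero2
    filter_upwards [h] with p hp
    simpa [sub_eq_zero] using hp
  have hae := Measure.ae_ae_of_ae_prod hzero3
  haveI : (ae (volume : Measure Torus2)).NeBot :=
    ae_neBot.mpr (IsProbabilityMeasure.ne_zero _)
  obtain ⟨x₀, hx₀⟩ := hae.exists
  refine ⟨f₀ x₀, ?_⟩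
  have hmapeq := (measurePreserving_add_left (volume : Measure Torus2) x₀).map_eq
  have hset : MeasurableSet {y : Torus2 | f₀ y = f₀ x₀} :=
    hmeas (measurableSet_singleton _)
  have hfinal : ∀ᵐ y ∂(volume : Measure Torus2), f₀ y = f₀ x₀ := by
    rw [← hmapeq, ae_map_iff (measurable_const_add x₀).aemeasurable hset]
    filter_upwards [hx₀] with y hy
    simpa using hy
  exact hfinal

end
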